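/- (Borel–Cantelli, convergence direction, game version.) Let s_i ∈ [0,1) for i ∈ ω with ∑_i s_i < ∞, and let {A_i : i ∈ ω} be subsets of 2^ω such that player II has a winning strategy in the measure game G(s_i, A_i) for every i. Then player II has a winning strategy in G(0, ⋃_{m=1}^∞ ⋂_{i=m}^∞ A_i). -/

import Mathlib

open MeasureTheory

namespace MeasureGame

/-- Cantor space `2^ω`. -/
abbrev Cantor : Type := ℕ → Bool

/-- The basic cylinder set `N_t` determined by a finite binary string `t`. -/
def cyl (t : List Bool) : Set Cantor := {x | ∀ i : Fin t.length, x i.1 = t.get i}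

/-- A round of the measure game: player I's pair of rationals, then player II's bit. -/
abbrev GRound : Type := (ℚ × ℚ) × Bool

/-- A strategy for player I in the measure game. -/
abbrev StratI : Type := List GRound → ℚ × ℚ

/-- A strategy for player II in the measure game. -/
abbrev StratII : Type := List GRound → ℚ × ℚ → Bool

/-- A run of the measure game. -/
abbrev Run : Type := ℕ → GRound

/-- The history (list of completed rounds) before round `n`. -/
def hist (r : Run) (n : ℕ) : List GRound := (List.range n).map r

/-- Player II's bit at round `n`. -/
def bits (r : Run) (n : ℕ) : Bool := (r n).2

/-- The finite binary string of player II's first `n` bits. -/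
def path (r : Run) (n : ℕ) : List Bool := (List.range n).map (bits r)

/-- The value player I assigned at round `n` to the one-bit extension of the current path by `b`. -/
def valI (r : Run) (n : ℕ) (b : Bool) : ℚ := if b then (r n).1.2 else (r n).1.1

/-- The value selected by player II's move at round `n`. -/
def sel (r : Run) (n : ℕ) : ℚ := valI r n (bits r n)

/-- Legality requirements on the single value player I assigned to `path r n ++ [b]`:
it is nonnegative, at most `μ(N_{t⌢b})`, and strictly below it when the latter is positive. -/
def mOK (μ : Measure Cantor) (r : Run) (n : ℕ) (b : Bool) : Prop :=
  0 ≤ valI r n b ∧ ((valI r n b : ℝ) ≤ (μ (cyl (path r n ++ [b]))).toReal) ∧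
    (0 < (μ (cyl (path r n ++ [b]))).toReal → (valI r n b : ℝ) < (μ (cyl (path r n ++ [b]))).toReal)

/-- Player I's move at round `n` of a run is legal (for the game `G(s, ·)`). -/
def IOK (μ : Measure Cantor) (s : ℝ) (r : Run) : ℕ → Prop
  | 0 => mOK μ r 0 false ∧ mOK μ r 0 true ∧ s < ((r 0).1.1 : ℝ) + ((r 0).1.2 : ℝ)
  | (n + 1) => mOK μ r (n + 1) false ∧ mOK μ r (n + 1) true ∧
      (r (n + 1)).1.1 + (r (n + 1)).1.2 = sel r n

/-- Player II's move at round `n` of a run is legal: the selected value is nonzero. -/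
def IIOK (r : Run) (n : ℕ) : Prop := sel r n ≠ 0

/-- The run `r` is consistent with player I's strategy `σ`. -/
def ConsI (σ : StratI) (r : Run) : Prop := ∀ n, (r n).1 = σ (hist r n)

/-- The run `r` is consistent with player II's strategy `τ`. -/
def ConsII (τ : StratII) (r : Run) : Prop := ∀ n, (r n).2 = τ (hist r n) (r n).1

/-- Player II wins the run `r` of `G(s, A)`: either player I is the first to break a rule,
or all rules are followed and the sequence of II's bits belongs to `A`. -/
def IIWinsRun (μ : Measure Cantor) (s : ℝ) (A : Set Cantor) (r : Run) : Prop :=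
  (∃ n, (∀ m < n, IOK μ s r m ∧ IIOK r m) ∧ ¬ IOK μ s r n) ∨
    ((∀ n, IOK μ s r n ∧ IIOK r n) ∧ bits r ∈ A)

/-- Player I has a winning strategy in the measure game `G(s, A)`. -/
def WinsI (μ : Measure Cantor) (s : ℝ) (A : Set Cantor) : Prop :=
  ∃ σ : StratI, ∀ r : Run, ConsI σ r → ¬ IIWinsRun μ s A r

/-- Player II has a winning strategy in the measure game `G(s, A)`. -/
def WinsII (μ : Measure Cantor) (s : ℝ) (A : Set Cantor) : Prop :=
  ∃ τ : StratII, ∀ r : Run, ConsII τ r → IIWinsRun μ s A r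

/-- The outer measure `μ*(A) = inf {μ(U) : U open, A ⊆ U}`. -/
noncomputable def outerM (μ : Measure Cantor) (A : Set Cantor) : ℝ :=
  sInf {v : ℝ | ∃ U : Set Cantor, IsOpen U ∧ A ⊆ U ∧ v = (μ U).toReal}

/-- The inner measure `μ_*(A) = sup {μ(F) : F closed, F ⊆ A}`. -/
noncomputable def innerM (μ : Measure Cantor) (A : Set Cantor) : ℝ :=
  sSup {v : ℝ | ∃ F : Set Cantor, IsClosed F ∧ F ⊆ A ∧ v = (μ F).toReal}




/-! ### Basic lemmas on hist/path/bits -/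

@[simp] lemma hist_zero (r : Run) : hist r 0 = [] := by simp [hist]
@[simp] lemma path_zero (r : Run) : path r 0 = [] := by simp [path]
lemma hist_succ (r : Run) (n : ℕ) : hist r (n+1) = hist r n ++ [r n] := by
  simp [hist, List.range_succ]
lemma path_succ (r : Run) (n : ℕ) : path r (n+1) = path r n ++ [bits r n] := by
  simp [path, List.range_succ]
@[simp] lemma path_length (r : Run) (n : ℕ) : (path r n).length = n := by simp [path]
@[simp] lemma hist_length (r : Run) (n : ℕ) : (hist r n).length = n := by simp [hist]

lemma hist_congr {r r' : Run} (n : ℕ) (h : ∀ k < n, r k = r' k) : hist r n = hist r' n := by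
  induction n with
  | zero => simp
  | succ n ih =>
    rw [hist_succ, hist_succ, ih (fun k hk => h k (Nat.lt_succ_of_lt hk)),
      h n (Nat.lt_succ_self n)]

lemma path_congr {r r' : Run} (n : ℕ) (h : ∀ k < n, r k = r' k) : path r n = path r' n := by
  induction n with
  | zero => simp
  | succ n ih =>
    rw [path_succ, path_succ, ih (fun k hk => h k (Nat.lt_succ_of_lt hk))]
    simp [bits, h n (Nat.lt_succ_self n)]

lemma mOK_congr {μ : Measure Cantor} {r r' : Run} {n : ℕ} (h : ∀ k ≤ n, r k = r' k) (b : Bool) :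
    mOK μ r n b ↔ mOK μ r' n b := by
  have hp : path r n = path r' n := path_congr n (fun k hk => h k (le_of_lt hk))
  have hn : r n = r' n := h n le_rfl
  unfold mOK valI
  rw [hp, hn]

lemma IOK_congr {μ : Measure Cantor} {s : ℝ} {r r' : Run} {n : ℕ} (h : ∀ k ≤ n, r k = r' k) :
    IOK μ s r n ↔ IOK μ s r' n := by
  cases n with
  | zero =>
    show (mOK μ r 0 false ∧ mOK μ r 0 true ∧ s < ((r 0).1.1 : ℝ) + ((r 0).1.2 : ℝ)) ↔
      (mOK μ r' 0 false ∧ mOK μ r' 0 true ∧ s < ((r' 0).1.1 : ℝ) + ((r' 0).1.2 : ℝ))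
    rw [mOK_congr h, mOK_congr h, h 0 le_rfl]
  | succ n =>
    show (mOK μ r (n+1) false ∧ mOK μ r (n+1) true ∧
        (r (n+1)).1.1 + (r (n+1)).1.2 = sel r n) ↔
      (mOK μ r' (n+1) false ∧ mOK μ r' (n+1) true ∧
        (r' (n+1)).1.1 + (r' (n+1)).1.2 = sel r' n)
    rw [mOK_congr h, mOK_congr h, h (n+1) le_rfl]
    unfold sel valI bits
    rw [h n (Nat.le_succ n)]

lemma sel_nonneg {μ : Measure Cantor} {r : Run} {n : ℕ} (h : mOK μ r n false ∧ mOK μ r n true) :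
    0 ≤ sel r n := by
  unfold sel
  cases hb : bits r n
  · exact h.1.1
  · exact h.2.1

/-- From a winning strategy: any fully I-legal consistent run has all selections nonzero and
lands in `A`. -/
lemma winning_run_props {μ : Measure Cantor} {si : ℝ} {Ai : Set Cantor} {τ : StratII}
    (hτ : ∀ r : Run, ConsII τ r → IIWinsRun μ si Ai r)
    {r : Run} (hc : ConsII τ r) (hok : ∀ n, IOK μ si r n) :
    (∀ n, sel r n ≠ 0) ∧ bits r ∈ Ai := by
  rcases hτ r hc with ⟨n, _, hbad⟩ | ⟨hall, hA⟩
  · exact absurd (hok n) hbad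
  · exact ⟨fun n => (hall n).2, hA⟩

/-! ### Cylinder lemmas -/

@[simp] lemma cyl_nil : cyl [] = Set.univ := by
  ext x; simp [cyl]

lemma mem_cyl_iff {t : List Bool} {x : Cantor} :
    x ∈ cyl t ↔ ∀ i : Fin t.length, x i.1 = t.get i := Iff.rfl

lemma mem_cyl_append_iff {t : List Bool} {b : Bool} {x : Cantor} :
    x ∈ cyl (t ++ [b]) ↔ x ∈ cyl t ∧ x t.length = b := by
  constructor
  · intro h
    constructor
    · intro i
      have hi : (i : ℕ) < (t ++ [b]).length := by
        simp only [List.length_append, List.length_singleton]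
        exact Nat.lt_succ_of_lt i.2
      have := h ⟨i, hi⟩
      simpa [List.getElem_append_left i.2] using this
    · have hl : t.length < (t ++ [b]).length := by simp
      have := h ⟨t.length, hl⟩
      simpa using this
  · rintro ⟨h1, h2⟩ i
    rcases Nat.lt_or_ge (i : ℕ) t.length with hi | hi
    · have := h1 ⟨i, hi⟩
      simpa [List.getElem_append_left hi] using this
    · have hi2 : (i : ℕ) < t.length + 1 := by
        have := i.2; simpa using this
      have : (i : ℕ) = t.length := le_antisymm (Nat.lt_succ_iff.mp hi2) hi
      have hget : (t ++ [b]).get i = b := by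
        simp [this]
      rw [hget, this]
      exact h2

lemma measurable_cyl (t : List Bool) : MeasurableSet (cyl t) := by
  have : cyl t = ⋂ i : Fin t.length, {x : Cantor | x i.1 = t.get i} := by
    ext x; simp [cyl]
  rw [this]
  refine MeasurableSet.iInter fun i => ?_
  have : {x : Cantor | x i.1 = t.get i} = (fun x : Cantor => x i.1) ⁻¹' {t.get i} := by
    ext x; simp
  rw [this]
  exact (measurable_pi_apply (i : ℕ)) (measurableSet_singleton (t.get i))

lemma cyl_split (t : List Bool) :
    cyl t = cyl (t ++ [false]) ∪ cyl (t ++ [true]) := by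
  ext x
  simp only [Set.mem_union, mem_cyl_append_iff]
  constructor
  · intro h
    cases hx : x t.length
    · exact Or.inl ⟨h, rfl⟩
    · exact Or.inr ⟨h, rfl⟩

  · rintro (⟨h, _⟩ | ⟨h, _⟩) <;> exact h

lemma cyl_append_disjoint (t : List Bool) :
    Disjoint (cyl (t ++ [false])) (cyl (t ++ [true])) := by
  rw [Set.disjoint_iff_inter_eq_empty]
  ext x
  simp only [Set.mem_inter_iff, mem_cyl_append_iff, Set.mem_empty_iff_false, iff_false]
  rintro ⟨⟨_, h1⟩, ⟨_, h2⟩⟩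
  rw [h1] at h2; exact Bool.noConfusion h2

/-- Splitting a cylinder-intersection measure into the two children. -/
lemma measure_cylF_split (μ : Measure Cantor) [IsProbabilityMeasure μ] {F : Set Cantor}
    (hF : MeasurableSet F) (t : List Bool) :
    (μ (cyl t ∩ F)).toReal
      = (μ (cyl (t ++ [false]) ∩ F)).toReal + (μ (cyl (t ++ [true]) ∩ F)).toReal := by
  have hdis : Disjoint (cyl (t ++ [false]) ∩ F) (cyl (t ++ [true]) ∩ F) :=
    (cyl_append_disjoint t).mono (Set.inter_subset_left) (Set.inter_subset_left)
  have hm0 : MeasurableSet (cyl (t ++ [false]) ∩ F) := (measurable_cyl _).inter hF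
  have hm1 : MeasurableSet (cyl (t ++ [true]) ∩ F) := (measurable_cyl _).inter hF
  have hsplit : cyl t ∩ F = (cyl (t ++ [false]) ∩ F) ∪ (cyl (t ++ [true]) ∩ F) := by
    rw [cyl_split t, Set.union_inter_distrib_right]
  rw [hsplit, measure_union hdis hm1]
  rw [ENNReal.toReal_add (measure_ne_top μ _) (measure_ne_top μ _)]

lemma measure_cyl_split (μ : Measure Cantor) [IsProbabilityMeasure μ] (t : List Bool) :
    (μ (cyl t)).toReal
      = (μ (cyl (t ++ [false]))).toReal + (μ (cyl (t ++ [true]))).toReal := by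
  have := measure_cylF_split μ MeasurableSet.univ t
  simpa using this

/-- Two distinct same-length cylinders are disjoint. -/
lemma cyl_disjoint_same_length {t t' : List Bool} (hl : t.length = t'.length) (hne : t ≠ t') :
    Disjoint (cyl t) (cyl t') := by
  rw [Set.disjoint_iff_inter_eq_empty]
  ext x
  simp only [Set.mem_inter_iff, Set.mem_empty_iff_false, iff_false]
  rintro ⟨h1, h2⟩
  apply hne
  apply List.ext_get hl
  intro i hi hi'
  have e1 := h1 ⟨i, hi⟩
  have e2 := h2 ⟨i, hi'⟩
  simp only at e1 e2
  rw [← e1, ← e2]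



/-! ### Dyadic-style grids -/

/-- Grid step at level `n` with base `e`. -/
def gstep (e : ℚ) (n : ℕ) : ℚ := e / (8 * 4 ^ n)

/-- Margin at level `n`. -/
def sg (e : ℚ) (n : ℕ) : ℚ := e / 4 ^ n

lemma gstep_pos {e : ℚ} (he : 0 < e) (n : ℕ) : 0 < gstep e n := by
  apply div_pos he
  positivity

lemma sg_pos {e : ℚ} (he : 0 < e) (n : ℕ) : 0 < sg e n := by
  apply div_pos he; positivity

lemma gstep_succ (e : ℚ) (n : ℕ) : gstep e n = 4 * gstep e (n + 1) := by
  unfold gstep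
  rw [pow_succ]
  field_simp

lemma sg_recurrence {e : ℚ} (he : 0 < e) (n : ℕ) :
    2 * sg e (n + 1) + gstep e (n + 1) ≤ sg e n := by
  unfold sg gstep
  have hp : (0:ℚ) < (4:ℚ) ^ n := by positivity
  rw [pow_succ]
  have key : 2 * (e / (4 ^ n * 4)) + e / (8 * (4 ^ n * 4)) = e * 17 / (4 ^ n * 32) := by
    field_simp
    ring
  rw [key, div_le_div_iff₀ (by positivity) hp]
  nlinarith [hp, he]

def InGrid (e : ℚ) (n : ℕ) (q : ℚ) : Prop := ∃ k : ℕ, q = k * gstep e n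

lemma InGrid.zero (e : ℚ) (n : ℕ) : InGrid e n 0 := ⟨0, by simp⟩

lemma InGrid.mono {e : ℚ} {n : ℕ} {q : ℚ} (h : InGrid e n q) : InGrid e (n + 1) q := by
  rcases h with ⟨k, rfl⟩
  exact ⟨4 * k, by rw [gstep_succ]; push_cast; ring⟩

lemma InGrid.nonneg {e : ℚ} (he : 0 < e) {n : ℕ} {q : ℚ} (h : InGrid e n q) : 0 ≤ q := by
  rcases h with ⟨k, rfl⟩
  exact mul_nonneg (by positivity) (gstep_pos he n).le

lemma InGrid.sub {e : ℚ} (he : 0 < e) {n : ℕ} {q q' : ℚ} (hq : InGrid e n q)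
    (hq' : InGrid e n q') (hle : q' ≤ q) : InGrid e n (q - q') := by
  rcases hq with ⟨k, rfl⟩
  rcases hq' with ⟨j, rfl⟩
  have hg := gstep_pos he n
  have hjk : j ≤ k := by
    by_contra hc
    push_neg at hc
    have : (k : ℚ) < j := by exact_mod_cast hc
    nlinarith
  refine ⟨k - j, ?_⟩
  have : ((k - j : ℕ) : ℚ) = (k : ℚ) - j := by
    push_cast [Nat.cast_sub hjk]; ring
  rw [this]; ring

/-- Largest grid point below a real number. -/
noncomputable def gridFloor (e : ℚ) (n : ℕ) (z : ℝ) : ℚ :=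
  (⌊z / (gstep e n : ℝ)⌋.toNat : ℚ) * gstep e n

lemma gridFloor_inGrid (e : ℚ) (n : ℕ) (z : ℝ) : InGrid e n (gridFloor e n z) :=
  ⟨_, rfl⟩

lemma gridFloor_nonneg {e : ℚ} (he : 0 < e) (n : ℕ) (z : ℝ) : 0 ≤ gridFloor e n z := by
  unfold gridFloor
  have := (gstep_pos he n).le
  positivity

lemma gridFloor_le {e : ℚ} (he : 0 < e) {n : ℕ} {z : ℝ} (hz : 0 ≤ z) :
    ((gridFloor e n z : ℚ) : ℝ) ≤ z := by
  unfold gridFloor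
  have hg : (0:ℝ) < (gstep e n : ℝ) := by exact_mod_cast gstep_pos he n
  have hnn : (0:ℤ) ≤ ⌊z / (gstep e n : ℝ)⌋ := Int.floor_nonneg.mpr (by positivity)
  have ht : ((⌊z / (gstep e n : ℝ)⌋.toNat : ℕ) : ℝ) = (⌊z / (gstep e n : ℝ)⌋ : ℝ) := by
    exact_mod_cast Int.toNat_of_nonneg hnn
  push_cast
  rw [ht]
  have h1 : (⌊z / (gstep e n : ℝ)⌋ : ℝ) ≤ z / (gstep e n : ℝ) := Int.floor_le _
  calc (⌊z / (gstep e n : ℝ)⌋ : ℝ) * (gstep e n : ℝ)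
      ≤ (z / (gstep e n : ℝ)) * (gstep e n : ℝ) := by nlinarith
    _ = z := by field_simp

lemma gridFloor_gt {e : ℚ} (he : 0 < e) {n : ℕ} {z : ℝ} (hz : 0 ≤ z) :
    z - (gstep e n : ℝ) < ((gridFloor e n z : ℚ) : ℝ) := by
  unfold gridFloor
  have hg : (0:ℝ) < (gstep e n : ℝ) := by exact_mod_cast gstep_pos he n
  have hnn : (0:ℤ) ≤ ⌊z / (gstep e n : ℝ)⌋ := Int.floor_nonneg.mpr (by positivity)
  have ht : ((⌊z / (gstep e n : ℝ)⌋.toNat : ℕ) : ℝ) = (⌊z / (gstep e n : ℝ)⌋ : ℝ) := by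
    exact_mod_cast Int.toNat_of_nonneg hnn
  push_cast
  rw [ht]
  have h1 : z / (gstep e n : ℝ) - 1 < (⌊z / (gstep e n : ℝ)⌋ : ℝ) := Int.sub_one_lt_floor _
  calc z - (gstep e n : ℝ) = (z / (gstep e n : ℝ) - 1) * (gstep e n : ℝ) := by field_simp
    _ < (⌊z / (gstep e n : ℝ)⌋ : ℝ) * (gstep e n : ℝ) := by nlinarith

/-! ### The navigator's split -/

/-- The navigator's split of current value `u` at round `n`, where `a` and `b` are the
`μ(cyl · ∩ F)` masses of the two children. Components are kept `≤ mass/2 - sg (n+1)`. -/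
noncomputable def navSplit (e : ℚ) (a b : ℝ) (n : ℕ) (u : ℚ) : ℚ × ℚ :=
  if u ≤ 0 then (0, 0)
  else if (u : ℝ) ≤ a / 2 - (sg e (n+1) : ℝ) then (u, 0)
  else if a / 2 - (sg e (n+1) : ℝ) ≤ 0 then (0, u)
  else (gridFloor e (n+1) (a / 2 - (sg e (n+1) : ℝ)),
        u - gridFloor e (n+1) (a / 2 - (sg e (n+1) : ℝ)))

lemma navSplit_spec {e : ℚ} (he : 0 < e) {a b : ℝ} (ha : 0 ≤ a) (hb : 0 ≤ b)
    {n : ℕ} {u : ℚ} (hg : InGrid e n u) (hu : 0 < u)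
    (hub : (u : ℝ) ≤ (a + b) / 2 - (sg e n : ℝ)) :
    (navSplit e a b n u).1 + (navSplit e a b n u).2 = u ∧
    0 ≤ (navSplit e a b n u).1 ∧ 0 ≤ (navSplit e a b n u).2 ∧
    InGrid e (n+1) (navSplit e a b n u).1 ∧ InGrid e (n+1) (navSplit e a b n u).2 ∧
    (0 < (navSplit e a b n u).1 → ((navSplit e a b n u).1 : ℝ) ≤ a / 2 - (sg e (n+1) : ℝ)) ∧
    (0 < (navSplit e a b n u).2 → ((navSplit e a b n u).2 : ℝ) ≤ b / 2 - (sg e (n+1) : ℝ)) := by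
  have hrec : ((2 * sg e (n+1) + gstep e (n+1) : ℚ) : ℝ) ≤ ((sg e n : ℚ) : ℝ) := by
    exact_mod_cast sg_recurrence he n
  push_cast at hrec
  have hkey : (u : ℝ) ≤ (a / 2 - (sg e (n+1) : ℝ)) + (b / 2 - (sg e (n+1) : ℝ)) - (gstep e (n+1) : ℝ) := by
    have : (a + b) / 2 = a / 2 + b / 2 := by ring
    nlinarith
  unfold navSplit
  rw [if_neg (not_le.mpr hu)]
  by_cases h2 : (u : ℝ) ≤ a / 2 - (sg e (n+1) : ℝ)
  · rw [if_pos h2]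
    refine ⟨by ring, hu.le, le_rfl, hg.mono, InGrid.zero e _, fun _ => h2, fun h => absurd h (lt_irrefl 0)⟩
  · rw [if_neg h2]
    by_cases h3 : a / 2 - (sg e (n+1) : ℝ) ≤ 0
    · rw [if_pos h3]
      refine ⟨by ring, le_rfl, hu.le, InGrid.zero e _, hg.mono, fun h => absurd h (lt_irrefl 0), fun _ => ?_⟩
      have hgp : (0:ℝ) < (gstep e (n+1) : ℝ) := by exact_mod_cast gstep_pos he (n+1)
      nlinarith
    · rw [if_neg h3]
      push_neg at h2 h3
      set A : ℝ := a / 2 - (sg e (n+1) : ℝ) with hA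
      set v : ℚ := gridFloor e (n+1) A with hv
      have hvle : (v : ℝ) ≤ A := gridFloor_le he h3.le
      have hvgt : A - (gstep e (n+1) : ℝ) < (v : ℝ) := gridFloor_gt he h3.le
      have hv0 : 0 ≤ v := gridFloor_nonneg he _ _
      have hvgrid : InGrid e (n+1) v := gridFloor_inGrid e _ _
      clear_value A v
      have hvltu : v < u := by
        have : (v : ℝ) < (u : ℝ) := lt_of_le_of_lt hvle h2
        exact_mod_cast this
      refine ⟨by ring, hv0, by show (0:ℚ) ≤ u - v; linarith, hvgrid,
        (hg.mono).sub he hvgrid hvltu.le, fun _ => hvle, fun _ => ?_⟩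
      show ((u - v : ℚ) : ℝ) ≤ b / 2 - (sg e (n+1) : ℝ)
      have hc : ((u - v : ℚ) : ℝ) = (u : ℝ) - (v : ℝ) := by push_cast; ring
      rw [hc]
      nlinarith


/-! ### The navigator run -/

/-- `path` is the second components of `hist`. -/
lemma path_eq_hist_map (r : Run) (n : ℕ) : path r n = (hist r n).map Prod.snd := by
  induction n with
  | zero => simp
  | succ n ih => rw [path_succ, hist_succ, List.map_append, ih]; rfl

noncomputable def mF (μ : Measure Cantor) (F : Set Cantor) (t : List Bool) : ℝ :=
  (μ (cyl t ∩ F)).toReal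

lemma mF_nonneg (μ : Measure Cantor) (F : Set Cantor) (t : List Bool) : 0 ≤ mF μ F t :=
  ENNReal.toReal_nonneg

lemma mF_le_cyl (μ : Measure Cantor) [IsProbabilityMeasure μ] (F : Set Cantor) (t : List Bool) :
    mF μ F t ≤ (μ (cyl t)).toReal := by
  apply ENNReal.toReal_mono (measure_ne_top μ _)
  exact measure_mono Set.inter_subset_left

lemma mF_split (μ : Measure Cantor) [IsProbabilityMeasure μ] {F : Set Cantor}
    (hF : MeasurableSet F) (t : List Bool) :
    mF μ F t = mF μ F (t ++ [false]) + mF μ F (t ++ [true]) :=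
  measure_cylF_split μ hF t

/-- The last selected value in a history (or `u₀` at the start). -/
def lastVal (u₀ : ℚ) (L : List GRound) : ℚ :=
  match L.getLast? with
  | none => u₀
  | some g => if g.2 then g.1.2 else g.1.1

@[simp] lemma lastVal_nil (u₀ : ℚ) : lastVal u₀ [] = u₀ := rfl

lemma lastVal_hist_succ (u₀ : ℚ) (r : Run) (n : ℕ) :
    lastVal u₀ (hist r (n+1)) = sel r n := by
  unfold lastVal
  rw [hist_succ, List.getLast?_append_cons]
  simp [sel, valI, bits]
  split <;> simp_all

/-- One round of the navigator. -/
noncomputable def navRound (μ : Measure Cantor) (τ : StratII) (F : Set Cantor) (e u₀ : ℚ)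
    (L : List GRound) : GRound :=
  let t := L.map Prod.snd
  let p := navSplit e (mF μ F (t ++ [false])) (mF μ F (t ++ [true])) L.length (lastVal u₀ L)
  (p, τ L p)

noncomputable def navHist (μ : Measure Cantor) (τ : StratII) (F : Set Cantor) (e u₀ : ℚ) :
    ℕ → List GRound
  | 0 => []
  | n + 1 => navHist μ τ F e u₀ n ++ [navRound μ τ F e u₀ (navHist μ τ F e u₀ n)]

noncomputable def navRun (μ : Measure Cantor) (τ : StratII) (F : Set Cantor) (e u₀ : ℚ) : Run :=
  fun n => navRound μ τ F e u₀ (navHist μ τ F e u₀ n)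

lemma navRun_hist (μ : Measure Cantor) (τ : StratII) (F : Set Cantor) (e u₀ : ℚ) (n : ℕ) :
    hist (navRun μ τ F e u₀) n = navHist μ τ F e u₀ n := by
  induction n with
  | zero => simp [navHist]
  | succ n ih => rw [hist_succ, ih]; rfl

lemma navRun_consII (μ : Measure Cantor) (τ : StratII) (F : Set Cantor) (e u₀ : ℚ) :
    ConsII τ (navRun μ τ F e u₀) := by
  intro n
  rw [navRun_hist]
  rfl

/-- The pair played at round `n` of the navigator run. -/
lemma navRun_fst (μ : Measure Cantor) (τ : StratII) (F : Set Cantor) (e u₀ : ℚ) (n : ℕ) :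
    (navRun μ τ F e u₀ n).1 =
      navSplit e (mF μ F (path (navRun μ τ F e u₀) n ++ [false]))
        (mF μ F (path (navRun μ τ F e u₀) n ++ [true])) n
        (lastVal u₀ (hist (navRun μ τ F e u₀) n)) := by
  conv_lhs => rw [navRun]
  unfold navRound
  rw [← navRun_hist μ τ F e u₀ n, ← path_eq_hist_map, hist_length]

/-- The navigator invariant. -/
lemma navRun_invariant (μ : Measure Cantor) [IsProbabilityMeasure μ] (τ : StratII)
    {F : Set Cantor} (hF : MeasurableSet F) {e : ℚ} (he : 0 < e) {u₀ : ℚ} {si : ℝ}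
    (hu₀g : InGrid e 0 u₀) (hu₀le : (u₀ : ℝ) ≤ mF μ F [] / 2 - (sg e 0 : ℝ))
    (hu₀s : si < (u₀ : ℝ)) :
    ∀ n : ℕ, IOK μ si (navRun μ τ F e u₀) n ∧
      (∀ b, InGrid e (n+1) (valI (navRun μ τ F e u₀) n b)) ∧
      (∀ b, 0 < valI (navRun μ τ F e u₀) n b →
        ((valI (navRun μ τ F e u₀) n b : ℚ) : ℝ) ≤
          mF μ F (path (navRun μ τ F e u₀) n ++ [b]) / 2 - (sg e (n+1) : ℝ)) := by
  set r : Run := navRun μ τ F e u₀ with hr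
  -- facts about one round given the input value u with its invariants
  have main : ∀ n : ℕ, ∀ u : ℚ, lastVal u₀ (hist r n) = u → InGrid e n u → 0 ≤ u →
      ((u : ℝ) ≤ mF μ F (path r n) / 2 - (sg e n : ℝ) ∨ u = 0) →
      ((r n).1.1 + (r n).1.2 = u) ∧
      (∀ b, InGrid e (n+1) (valI r n b)) ∧
      (∀ b, 0 ≤ valI r n b) ∧
      (∀ b, 0 < valI r n b →
        ((valI r n b : ℚ) : ℝ) ≤ mF μ F (path r n ++ [b]) / 2 - (sg e (n+1) : ℝ)) := by
    intro n u hu hg h0 hbd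
    have hfst := navRun_fst μ τ F e u₀ n
    rw [← hr] at hfst
    rw [hu] at hfst
    rcases eq_or_lt_of_le h0 with h00 | hpos
    · -- u = 0 : the split is (0,0)
      have hsplit : (r n).1 = (0, 0) := by
        rw [hfst, ← h00]
        unfold navSplit
        rw [if_pos le_rfl]
      constructor
      · rw [hsplit]; simp [← h00]
      refine ⟨fun b => ?_, fun b => ?_, fun b hb => ?_⟩
      · cases b <;> simp [valI, hsplit, InGrid.zero]
      · cases b <;> simp [valI, hsplit]
      · exfalso
        cases b <;> simp [valI, hsplit] at hb
    · -- u > 0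
      have hbd' : (u : ℝ) ≤ mF μ F (path r n) / 2 - (sg e n : ℝ) := by
        rcases hbd with h | h
        · exact h
        · exact absurd h (ne_of_gt hpos)
      have hsum : mF μ F (path r n) =
          mF μ F (path r n ++ [false]) + mF μ F (path r n ++ [true]) := mF_split μ hF _
      have hspec := navSplit_spec (a := mF μ F (path r n ++ [false]))
        (b := mF μ F (path r n ++ [true])) he (mF_nonneg μ F _) (mF_nonneg μ F _)
        hg hpos (by rw [← hsum]; exact hbd')
      rw [← hfst] at hspec
      obtain ⟨hsumeq, h1, h2, h3, h4, h5, h6⟩ := hspec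
      refine ⟨hsumeq, fun b => ?_, fun b => ?_, fun b hb => ?_⟩
      · cases b <;> simpa [valI]
      · cases b <;> simpa [valI]
      · cases b
        · simpa [valI] using h5 (by simpa [valI] using hb)
        · simpa [valI] using h6 (by simpa [valI] using hb)
  -- derive mOK from the split bounds
  have mok : ∀ n : ℕ, (∀ b, 0 ≤ valI r n b) →
      (∀ b, InGrid e (n+1) (valI r n b)) →
      (∀ b, 0 < valI r n b →
        ((valI r n b : ℚ) : ℝ) ≤ mF μ F (path r n ++ [b]) / 2 - (sg e (n+1) : ℝ)) →
      ∀ b, mOK μ r n b := by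
    intro n hnn hgr hbnd b
    refine ⟨hnn b, ?_, ?_⟩
    · rcases eq_or_lt_of_le (hnn b) with h | h
      · rw [← h]; simp
      · have hb := hbnd b h
        have hsg : (0:ℝ) < (sg e (n+1) : ℝ) := by exact_mod_cast sg_pos he (n+1)
        have hle := mF_le_cyl μ F (path r n ++ [b])
        have hv : ((valI r n b : ℚ) : ℝ) > 0 := by exact_mod_cast h
        nlinarith [mF_nonneg μ F (path r n ++ [b])]
    · intro hμ
      rcases eq_or_lt_of_le (hnn b) with h | h
      · rw [← h]; exact_mod_cast hμ
      · have hb := hbnd b h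
        have hsg : (0:ℝ) < (sg e (n+1) : ℝ) := by exact_mod_cast sg_pos he (n+1)
        have hle := mF_le_cyl μ F (path r n ++ [b])
        have hv : ((valI r n b : ℚ) : ℝ) > 0 := by exact_mod_cast h
        nlinarith [mF_nonneg μ F (path r n ++ [b])]

  -- helper: extract the mOK pair from IOK
  intro n
  induction n with
  | zero =>
    have h := main 0 u₀ (by rw [hist_zero]; rfl) hu₀g (InGrid.nonneg he hu₀g)
      (Or.inl (by rw [path_zero]; simpa using hu₀le))
    have hmok := mok 0 h.2.2.1 h.2.1 h.2.2.2
    refine ⟨⟨hmok false, hmok true, ?_⟩, h.2.1, h.2.2.2⟩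
    have hq : (r 0).1.1 + (r 0).1.2 = u₀ := h.1
    have hq' : (((r 0).1.1 + (r 0).1.2 : ℚ) : ℝ) = ((u₀ : ℚ) : ℝ) := by
      rw [hq]
    push_cast at hq'
    linarith [hu₀s, hq'.ge, hq'.le]
  | succ n ih =>
    obtain ⟨hIOK, hgr, hbnd⟩ := ih
    have hmokn : mOK μ r n false ∧ mOK μ r n true := by
      cases n with
      | zero => exact ⟨hIOK.1, hIOK.2.1⟩
      | succ m => exact ⟨hIOK.1, hIOK.2.1⟩
    have hnn : 0 ≤ sel r n := sel_nonneg hmokn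
    have hselg : InGrid e (n+1) (sel r n) := hgr (bits r n)
    have hbd : ((sel r n : ℚ) : ℝ) ≤ mF μ F (path r (n+1)) / 2 - (sg e (n+1) : ℝ) ∨
        sel r n = 0 := by
      rcases eq_or_lt_of_le hnn with h | h
      · exact Or.inr h.symm
      · left
        rw [path_succ]
        exact hbnd (bits r n) h
    have h := main (n+1) (sel r n) (lastVal_hist_succ u₀ r n) hselg hnn hbd
    have hmok := mok (n+1) h.2.2.1 h.2.1 h.2.2.2
    exact ⟨⟨hmok false, hmok true, h.1⟩, h.2.1, h.2.2.2⟩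

/-! ### Compliant histories, alive and dead nodes -/

/-- The first `n` rounds of `r` are compliant for strategy `τ`, parameter `si`, grid base `e`. -/
def Compliant (μ : Measure Cantor) (τ : StratII) (si : ℝ) (e : ℚ) (n : ℕ) (r : Run) : Prop :=
  ∀ k < n, IOK μ si r k ∧ (∀ b, InGrid e (k+1) (valI r k b)) ∧ (r k).2 = τ (hist r k) (r k).1

lemma Compliant.mono {μ : Measure Cantor} {τ : StratII} {si : ℝ} {e : ℚ} {m n : ℕ} {r : Run}
    (h : Compliant μ τ si e n r) (hmn : m ≤ n) : Compliant μ τ si e m r :=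
  fun k hk => h k (lt_of_lt_of_le hk hmn)

/-- A node is alive if some compliant history traces it. -/
def Alive (μ : Measure Cantor) (τ : StratII) (si : ℝ) (e : ℚ) (t : List Bool) : Prop :=
  ∃ r : Run, Compliant μ τ si e t.length r ∧ path r t.length = t

lemma alive_nil (μ : Measure Cantor) (τ : StratII) (si : ℝ) (e : ℚ) :
    Alive μ τ si e [] := ⟨fun _ => default, fun k hk => absurd hk (Nat.not_lt_zero k), by simp⟩

lemma alive_of_alive_append {μ : Measure Cantor} {τ : StratII} {si : ℝ} {e : ℚ}
    {t : List Bool} {b : Bool} (h : Alive μ τ si e (t ++ [b])) : Alive μ τ si e t := by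
  obtain ⟨r, hc, hp⟩ := h
  have hl : (t ++ [b]).length = t.length + 1 := by simp
  rw [hl] at hc hp
  refine ⟨r, hc.mono (Nat.le_succ _), ?_⟩
  rw [path_succ] at hp
  exact List.append_inj_left' hp (by simp)

/-- Dead part at depth `d`. -/
def FullDead (μ : Measure Cantor) (τ : StratII) (si : ℝ) (e : ℚ) (d : ℕ) : Set Cantor :=
  ⋃ t ∈ {t : List Bool | t.length = d ∧ ¬ Alive μ τ si e t}, cyl t

/-- All dead nodes. -/
def DeadSet (μ : Measure Cantor) (τ : StratII) (si : ℝ) (e : ℚ) : Set Cantor :=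
  ⋃ d, FullDead μ τ si e d

lemma measurable_fullDead (μ : Measure Cantor) (τ : StratII) (si : ℝ) (e : ℚ) (d : ℕ) :
    MeasurableSet (FullDead μ τ si e d) :=
  MeasurableSet.biUnion (Set.to_countable _) (fun t _ => measurable_cyl t)

lemma measurable_deadSet (μ : Measure Cantor) (τ : StratII) (si : ℝ) (e : ℚ) :
    MeasurableSet (DeadSet μ τ si e) :=
  MeasurableSet.iUnion (measurable_fullDead μ τ si e)

lemma fullDead_mono (μ : Measure Cantor) (τ : StratII) (si : ℝ) (e : ℚ) :
    Monotone (FullDead μ τ si e) := by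
  have step : ∀ d, FullDead μ τ si e d ⊆ FullDead μ τ si e (d + 1) := by
    intro d x hx
    simp only [FullDead, Set.mem_iUnion, Set.mem_setOf_eq] at hx ⊢
    obtain ⟨t, ⟨hlen, hdead⟩, hxt⟩ := hx
    rw [cyl_split t] at hxt
    rcases hxt with hxt | hxt
    · exact ⟨t ++ [false], ⟨by simp [hlen], fun h => hdead (alive_of_alive_append h)⟩, hxt⟩
    · exact ⟨t ++ [true], ⟨by simp [hlen], fun h => hdead (alive_of_alive_append h)⟩, hxt⟩
  intro a b hab
  induction b with
  | zero => rw [Nat.le_zero.mp hab]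
  | succ b ih =>
    rcases Nat.lt_or_ge a (b+1) with h | h
    · exact subset_trans (ih (Nat.lt_succ_iff.mp h)) (step b)
    · have : a = b + 1 := le_antisymm hab h
      rw [this]

lemma cyl_subset_deadSet {μ : Measure Cantor} {τ : StratII} {si : ℝ} {e : ℚ}
    {t : List Bool} (h : ¬ Alive μ τ si e t) : cyl t ⊆ DeadSet μ τ si e := by
  intro x hx
  exact Set.mem_iUnion.mpr ⟨t.length, Set.mem_iUnion.mpr ⟨t,
    Set.mem_iUnion.mpr ⟨⟨rfl, h⟩, hx⟩⟩⟩

/-- The key navigator bound: dead nodes at any fixed depth carry measure at most `2 si + 3 e`. -/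
lemma fullDead_measure_le (μ : Measure Cantor) [IsProbabilityMeasure μ] {τ : StratII}
    {si : ℝ} {Ai : Set Cantor} (hτ : ∀ r : Run, ConsII τ r → IIWinsRun μ si Ai r)
    (hsi : 0 ≤ si) {e : ℚ} (he : 0 < e) (d : ℕ) :
    (μ (FullDead μ τ si e d)).toReal ≤ 2 * si + 3 * (e : ℝ) := by
  by_contra hcon
  push_neg at hcon
  set F : Set Cantor := FullDead μ τ si e d with hFdef
  have hF : MeasurableSet F := measurable_fullDead μ τ si e d
  have hmF : mF μ F [] = (μ F).toReal := by
    unfold mF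
    rw [cyl_nil, Set.univ_inter]
  -- initial value
  have hsge : (sg e 0 : ℝ) = (e : ℝ) := by norm_num [sg]
  have hgse : (gstep e 0 : ℝ) = (e : ℝ) / 8 := by
    norm_num [gstep]
  have hepos : (0:ℝ) < (e : ℝ) := by exact_mod_cast he
  have hz : (0:ℝ) ≤ mF μ F [] / 2 - (sg e 0 : ℝ) := by
    rw [hmF, hsge]; nlinarith
  set u₀ : ℚ := gridFloor e 0 (mF μ F [] / 2 - (sg e 0 : ℝ)) with hu₀
  have hu₀g : InGrid e 0 u₀ := gridFloor_inGrid e 0 _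
  have hu₀le : (u₀ : ℝ) ≤ mF μ F [] / 2 - (sg e 0 : ℝ) := gridFloor_le he hz
  have hu₀s : si < (u₀ : ℝ) := by
    have := gridFloor_gt he (n := 0) hz
    rw [← hu₀] at this
    rw [hmF] at this hu₀le
    rw [hsge, hgse] at this
    nlinarith
  have hinv := navRun_invariant μ τ hF he hu₀g hu₀le hu₀s
  set r : Run := navRun μ τ F e u₀ with hr
  have hok : ∀ n, IOK μ si r n := fun n => (hinv n).1
  have hprops := winning_run_props hτ (navRun_consII μ τ F e u₀) hok
  -- the path stays inside positive F-mass
  have hpos : 0 < mF μ F (path r d) := by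
    cases d with
    | zero =>
      rw [path_zero, hmF]
      nlinarith
    | succ k =>
      have hsel : sel r k ≠ 0 := hprops.1 k
      have hmokk : mOK μ r k false ∧ mOK μ r k true := by
        have h := hok k
        cases k with
        | zero => exact ⟨h.1, h.2.1⟩
        | succ m => exact ⟨h.1, h.2.1⟩
      have hnn : 0 ≤ sel r k := sel_nonneg hmokk
      have hselpos : 0 < sel r k := lt_of_le_of_ne hnn (Ne.symm hsel)
      have hbnd := (hinv k).2.2 (bits r k) hselpos
      have hsg : (0:ℝ) < (sg e (k+1) : ℝ) := by exact_mod_cast sg_pos he (k+1)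
      have hv : (0:ℝ) < ((sel r k : ℚ) : ℝ) := by exact_mod_cast hselpos
      rw [path_succ]
      unfold sel at hbnd hv
      nlinarith
  -- but the navigator traces an alive node, so the intersection is empty
  have halive : Alive μ τ si e (path r d) := by
    refine ⟨r, ?_, ?_⟩
    · rw [path_length]
      intro k _
      exact ⟨(hinv k).1, (hinv k).2.1, navRun_consII μ τ F e u₀ k⟩
    · rw [path_length]
  have hempty : cyl (path r d) ∩ F = ∅ := by
    rw [hFdef]
    unfold FullDead
    ext x
    simp only [Set.mem_inter_iff, Set.mem_iUnion, Set.mem_setOf_eq, Set.mem_empty_iff_false,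
      iff_false, not_and]
    rintro hx ⟨t, ⟨hlen, hdead⟩, hxt⟩
    have hne : t ≠ path r d := by
      intro hteq
      rw [hteq] at hdead
      exact hdead halive
    have hdisj := cyl_disjoint_same_length (by rw [hlen, path_length]) hne
    exact (Set.disjoint_left.mp hdisj hxt) hx
  rw [mF, hempty] at hpos
  simp at hpos

/-- Measure bound for the whole dead set. -/
lemma deadSet_measure_le (μ : Measure Cantor) [IsProbabilityMeasure μ] {τ : StratII}
    {si : ℝ} {Ai : Set Cantor} (hτ : ∀ r : Run, ConsII τ r → IIWinsRun μ si Ai r)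
    (hsi : 0 ≤ si) {e : ℚ} (he : 0 < e) :
    (μ (DeadSet μ τ si e)).toReal ≤ 2 * si + 3 * (e : ℝ) := by
  have hc : 0 ≤ 2 * si + 3 * (e : ℝ) := by
    have : (0:ℝ) < (e:ℝ) := by exact_mod_cast he
    nlinarith
  have hsup : μ (DeadSet μ τ si e) = ⨆ d, μ (FullDead μ τ si e d) := by
    apply Directed.measure_iUnion
    exact (fullDead_mono μ τ si e).directed_le
  have hle : μ (DeadSet μ τ si e) ≤ ENNReal.ofReal (2 * si + 3 * (e:ℝ)) := by
    rw [hsup]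
    apply iSup_le
    intro d
    rw [← ENNReal.ofReal_toReal (measure_ne_top μ (FullDead μ τ si e d))]
    exact ENNReal.ofReal_le_ofReal (fullDead_measure_le μ hτ hsi he d)
  calc (μ (DeadSet μ τ si e)).toReal
      ≤ (ENNReal.ofReal (2 * si + 3 * (e:ℝ))).toReal := by
        apply ENNReal.toReal_mono _ hle
        exact ENNReal.ofReal_ne_top
    _ = 2 * si + 3 * (e:ℝ) := ENNReal.toReal_ofReal hc

/-! ### König extraction of a full compliant run -/

lemma path_eq_map_range {r : Run} {x : Cantor} {n : ℕ} :
    path r n = (List.range n).map x ↔ ∀ k < n, bits r k = x k := by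
  constructor
  · intro h k hk
    have h1 := List.get_of_eq h ⟨k, by simpa [path] using hk⟩
    simpa [path, bits] using h1
  · intro h
    apply List.ext_get (by simp [path])
    intro i h1 h2
    have hk : i < n := by simpa [path] using h1
    simpa [path, bits] using h (i) hk

lemma valI_le_one (μ : Measure Cantor) [IsProbabilityMeasure μ] {r : Run} {n : ℕ} {b : Bool}
    (h : mOK μ r n b) : valI r n b ≤ 1 := by
  have h2 := h.2.1
  have h3 : (μ (cyl (path r n ++ [b]))).toReal ≤ 1 := by
    rw [← ENNReal.toReal_one]
    apply ENNReal.toReal_mono ENNReal.one_ne_top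
    rw [← measure_univ (μ := μ)]
    exact measure_mono (Set.subset_univ _)
  have : ((valI r n b : ℚ) : ℝ) ≤ 1 := le_trans h2 h3
  exact_mod_cast this

lemma finite_grid_bounded {e : ℚ} (he : 0 < e) (n : ℕ) :
    {q : ℚ | InGrid e n q ∧ q ≤ 1}.Finite := by
  have hg := gstep_pos he n
  set N : ℕ := ⌈(1:ℚ) / gstep e n⌉₊ with hN
  apply Set.Finite.subset ((Set.finite_Iic N).image (fun k : ℕ => (k : ℚ) * gstep e n))
  rintro q ⟨⟨k, rfl⟩, hle⟩
  refine ⟨k, ?_, rfl⟩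
  simp only [Set.mem_Iic]
  have hk : (k : ℚ) ≤ 1 / gstep e n := by
    rw [le_div_iff₀ hg]
    exact hle
  calc k ≤ ⌈(k:ℚ)⌉₊ := by simp
    _ ≤ N := Nat.ceil_le_ceil (le_trans hk (le_refl _))

section Konig

variable (μ : Measure Cantor) [IsProbabilityMeasure μ] (τ : StratII) (si : ℝ) (e : ℚ) (x : Cantor)

/-- Level-`n` set of normalized compliant histories tracing `x`. -/
def TSet (n : ℕ) : Set Run :=
  {r : Run | Compliant μ τ si e n r ∧ (∀ k < n, bits r k = x k) ∧ ∀ k, n ≤ k → r k = default}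

def truncR (n : ℕ) (r : Run) : Run := fun k => if k < n then r k else default

lemma compliant_congr {μ : Measure Cantor} {τ : StratII} {si : ℝ} {e : ℚ} {n : ℕ} {r r' : Run}
    (h : ∀ k < n, r k = r' k) (hc : Compliant μ τ si e n r) : Compliant μ τ si e n r' := by
  intro k hk
  obtain ⟨h1, h2, h3⟩ := hc k hk
  have hk' : ∀ j ≤ k, r j = r' j := fun j hj => h j (lt_of_le_of_lt hj hk)
  refine ⟨(IOK_congr hk').mp h1, ?_, ?_⟩
  · intro b
    have := h2 b
    unfold valI at this ⊢
    rw [← hk' k le_rfl]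
    exact this
  · rw [← hk' k le_rfl, ← hist_congr k (fun j hj => hk' j (le_of_lt hj))]
    exact h3

lemma truncR_mem_TSet {n m : ℕ} (hnm : n ≤ m) {r : Run} (hr : r ∈ TSet μ τ si e x m) :
    truncR n r ∈ TSet μ τ si e x n := by
  obtain ⟨hc, hb, _⟩ := hr
  have hagree : ∀ k < n, r k = truncR n r k := by
    intro k hk; simp [truncR, hk]
  refine ⟨compliant_congr hagree (hc.mono hnm), fun k hk => ?_, fun k hk => ?_⟩
  · unfold bits truncR
    rw [if_pos hk]
    exact hb k (lt_of_lt_of_le hk hnm)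
  · simp [truncR, Nat.not_lt.mpr hk]

lemma TSet_finite (he : 0 < e) (n : ℕ) : (TSet μ τ si e x n).Finite := by
  classical
  set S : Set (Fin n → ℚ × ℚ) :=
    Set.pi Set.univ (fun k : Fin n =>
      ({q : ℚ | InGrid e (k.1+1) q ∧ q ≤ 1} ×ˢ {q : ℚ | InGrid e (k.1+1) q ∧ q ≤ 1})) with hS
  have hSfin : S.Finite := by
    apply Set.Finite.pi
    intro k
    exact (finite_grid_bounded he (k.1+1)).prod (finite_grid_bounded he (k.1+1))
  have himage : (fun (r : Run) (k : Fin n) => (r k.1).1) '' (TSet μ τ si e x n) ⊆ S := by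
    rintro f ⟨r, hr, rfl⟩
    intro k _
    obtain ⟨hIOK, hgrid, _⟩ := hr.1 k.1 k.2
    have hmok : mOK μ r k.1 false ∧ mOK μ r k.1 true := by
      cases hk : k.1 with
      | zero => rw [hk] at hIOK; exact ⟨hIOK.1, hIOK.2.1⟩
      | succ m => rw [hk] at hIOK; exact ⟨hIOK.1, hIOK.2.1⟩
    constructor
    · exact ⟨by simpa [valI] using hgrid false, by simpa [valI] using valI_le_one μ hmok.1⟩
    · exact ⟨by simpa [valI] using hgrid true, by simpa [valI] using valI_le_one μ hmok.2⟩
  apply Set.Finite.of_finite_image (f := fun (r : Run) (k : Fin n) => (r k.1).1)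
  · exact hSfin.subset himage
  · -- injectivity on TSet
    rintro r hr r' hr' hf
    have hlt : ∀ k < n, r k = r' k := by
      intro k hk
      induction k using Nat.strong_induction_on with
      | _ k ih =>
        have hpair : (r k).1 = (r' k).1 := congrFun hf ⟨k, hk⟩
        have hhist : hist r k = hist r' k :=
          hist_congr k (fun j hj => ih j hj (lt_trans hj hk))
        have hb : (r k).2 = (r' k).2 := by
          rw [(hr.1 k hk).2.2, (hr'.1 k hk).2.2, hpair, hhist]
        exact Prod.ext hpair hb
    funext k
    rcases Nat.lt_or_ge k n with hk | hk
    · exact hlt k hk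
    · rw [hr.2.2 k hk, hr'.2.2 k hk]

/-- Goodness: extendability to every level. -/
def Good (n : ℕ) (r : Run) : Prop :=
  r ∈ TSet μ τ si e x n ∧ ∀ m, n ≤ m → ∃ r' ∈ TSet μ τ si e x m, ∀ k < n, r' k = r k

lemma good_step (he : 0 < e) {n : ℕ} {r : Run} (hg : Good μ τ si e x n r) :
    ∃ r', (∀ k < n, r' k = r k) ∧ Good μ τ si e x (n+1) r' := by
  classical
  by_contra hcon
  push_neg at hcon
  set C : Set Run := {r' | r' ∈ TSet μ τ si e x (n+1) ∧ ∀ k < n, r' k = r k} with hC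
  have hCfin : C.Finite := (TSet_finite μ τ si e x he (n+1)).subset (fun r' hr' => hr'.1)
  have hbad : ∀ r' ∈ C, ∃ m, n + 1 ≤ m ∧
      ∀ r'' ∈ TSet μ τ si e x m, ∃ k < n + 1, r'' k ≠ r' k := by
    intro r' hr'
    have h1 := hcon r' hr'.2
    unfold Good at h1
    push_neg at h1
    exact h1 hr'.1
  choose mfun hm1 hm2 using hbad
  have hBex : ∃ B, ∀ r' (h : r' ∈ C), mfun r' h ≤ B := by
    set g : Run → ℕ := fun r' => if h : r' ∈ C then mfun r' h else 0 with hgdef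
    obtain ⟨B, hB⟩ := (hCfin.image g).bddAbove
    refine ⟨B, fun r' h => ?_⟩
    have h2 : g r' ≤ B := hB ⟨r', h, rfl⟩
    simp only [hgdef, dif_pos h] at h2
    exact h2
  obtain ⟨B, hB⟩ := hBex
  set m' : ℕ := max B (n+1) with hm'
  obtain ⟨r₁, hr₁, hagr₁⟩ := hg.2 m' (le_trans (Nat.le_succ n) (le_max_right _ _))
  set c : Run := truncR (n+1) r₁ with hcdef
  have hcT : c ∈ TSet μ τ si e x (n+1) := truncR_mem_TSet μ τ si e x (le_max_right _ _) hr₁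
  have hcC : c ∈ C := by
    refine ⟨hcT, fun k hk => ?_⟩
    have : c k = r₁ k := by simp [hcdef, truncR, Nat.lt_succ_of_lt hk]
    rw [this]
    exact hagr₁ k hk
  have hmc : mfun c hcC ≤ m' := le_trans (hB c hcC) (le_max_left _ _)
  set r₂ : Run := truncR (mfun c hcC) r₁ with hr₂def
  have hr₂T : r₂ ∈ TSet μ τ si e x (mfun c hcC) := truncR_mem_TSet μ τ si e x hmc hr₁
  obtain ⟨k, hk, hne⟩ := hm2 c hcC r₂ hr₂T
  apply hne
  have h1 : r₂ k = r₁ k := by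
    simp [hr₂def, truncR, lt_of_lt_of_le hk (hm1 c hcC)]
  have h2 : c k = r₁ k := by simp [hcdef, truncR, hk]
  rw [h1, h2]

/-- König: if every prefix of `x` is alive, there is a full compliant run tracing `x`. -/
lemma exists_compliant_run (he : 0 < e)
    (halive : ∀ n, Alive μ τ si e ((List.range n).map x)) :
    ∃ r : Run, (∀ n, IOK μ si r n) ∧ ConsII τ r ∧ bits r = x := by
  classical
  have hTne : ∀ n, (TSet μ τ si e x n).Nonempty := by
    intro n
    obtain ⟨r, hc, hp⟩ := halive n
    have hlen : ((List.range n).map x).length = n := by simp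
    rw [hlen] at hc hp
    have hbits : ∀ k < n, bits r k = x k := path_eq_map_range.mp hp
    refine ⟨truncR n r, ?_, fun k hk => ?_, fun k hk => ?_⟩
    · exact compliant_congr (fun k hk => by simp [truncR, hk]) hc
    · unfold bits truncR
      rw [if_pos hk]
      exact hbits k hk
    · simp [truncR, Nat.not_lt.mpr hk]
  have good0 : Good μ τ si e x 0 (fun _ => default) := by
    refine ⟨⟨fun k hk => absurd hk (Nat.not_lt_zero k), fun k hk => absurd hk (Nat.not_lt_zero k),
      fun _ _ => rfl⟩, fun m _ => ?_⟩
    obtain ⟨r', hr'⟩ := hTne m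
    exact ⟨r', hr', fun k hk => absurd hk (Nat.not_lt_zero k)⟩
  have step : ∀ n (rr : Run), Good μ τ si e x n rr →
      ∃ r', (∀ k < n, r' k = rr k) ∧ Good μ τ si e x (n+1) r' :=
    fun n rr h => good_step μ τ si e x he h
  choose f hagree hgood using step
  let seq : ∀ n : ℕ, {rr : Run // Good μ τ si e x n rr} :=
    fun n => Nat.rec ⟨(fun _ => default), good0⟩
      (fun n p => ⟨f n p.1 p.2, (hgood n p.1 p.2)⟩) n
  have hseq_succ : ∀ n k, k < n → (seq (n+1)).1 k = (seq n).1 k := by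
    intro n k hk
    exact hagree n (seq n).1 (seq n).2 k hk
  have chain : ∀ n m, n ≤ m → ∀ k < n, (seq m).1 k = (seq n).1 k := by
    intro n m hnm
    induction m with
    | zero =>
      intro k hk
      rw [Nat.le_zero.mp hnm]
    | succ m ih =>
      intro k hk
      rcases Nat.lt_or_ge n (m+1) with h | h
      · have hnm' : n ≤ m := Nat.lt_succ_iff.mp h
        rw [hseq_succ m k (lt_of_lt_of_le hk hnm'), ih hnm' k hk]
      · have : n = m + 1 := le_antisymm hnm h
        rw [this]
  set rstar : Run := fun k => (seq (k+1)).1 k with hrstar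
  have hagree_star : ∀ n, ∀ k < n, (seq n).1 k = rstar k := by
    intro n k hk
    rw [hrstar]
    simp only
    rw [chain (k+1) n hk k (Nat.lt_succ_self k)]
  have hcomp : ∀ n, Compliant μ τ si e n rstar := by
    intro n
    exact compliant_congr (hagree_star n) ((seq n).2.1.1)
  refine ⟨rstar, fun n => ?_, fun n => ?_, ?_⟩
  · exact (hcomp (n+1) n (Nat.lt_succ_self n)).1
  · exact (hcomp (n+1) n (Nat.lt_succ_self n)).2.2
  · funext k
    have h1 := (seq (k+1)).2.1.2.1 k (Nat.lt_succ_self k)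
    have h2 : bits rstar k = bits (seq (k+1)).1 k := by
      unfold bits
      rw [hagree_star (k+1) k (Nat.lt_succ_self k)]
    rw [h2, h1]

end Konig

/-! ### The final strategy -/

def qOf (h : List GRound) (mv : ℚ × ℚ) : ℚ :=
  match h with
  | [] => mv.1 + mv.2
  | g :: _ => g.1.1 + g.1.2

@[simp] lemma qOf_nil (mv : ℚ × ℚ) : qOf [] mv = mv.1 + mv.2 := rfl

lemma qOf_hist_succ (r : Run) (n : ℕ) (mv : ℚ × ℚ) :
    qOf (hist r (n+1)) mv = (r 0).1.1 + (r 0).1.2 := by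
  unfold hist
  rw [List.range_succ_eq_map]
  rfl

section Final

variable (μ : Measure Cantor) [IsProbabilityMeasure μ] (T : ℕ → StratII) (s : ℕ → ℝ)

/-- grid base parameter for game `i`, given initial total `q`. -/
def epsq (q : ℚ) (i : ℕ) : ℚ := q / 2 ^ (i + 9)

lemma epsq_pos {q : ℚ} (hq : 0 < q) (i : ℕ) : 0 < epsq q i := by
  unfold epsq; positivity

lemma epsq_cast (q : ℚ) (i : ℕ) :
    ((epsq q i : ℚ) : ℝ) = ((q : ℝ) / 512) * (1/2) ^ i := by
  unfold epsq
  push_cast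
  rw [show ((1:ℝ)/2)^i = ((2:ℝ)^i)⁻¹ by rw [one_div, inv_pow]]
  rw [pow_add, show ((2:ℝ)^9) = 512 from by norm_num]
  rw [div_mul_eq_mul_div, ← div_eq_mul_inv, div_div]

lemma summable_epsq (q : ℚ) : Summable (fun i => ((epsq q i : ℚ) : ℝ)) := by
  simp only [epsq_cast]
  exact (summable_geometric_of_lt_one (by norm_num) (by norm_num)).mul_left _

lemma tsum_epsq_le {q : ℚ} (hq : 0 < q) : ∑' i, ((epsq q i : ℚ) : ℝ) ≤ (q : ℝ) / 256 := by
  have h := tsum_geometric_of_lt_one (r := (1/2 : ℝ)) (by norm_num) (by norm_num)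
  have heq : ∑' i, ((epsq q i : ℚ) : ℝ) = (q : ℝ) / 256 := by
    calc ∑' i, ((epsq q i : ℚ) : ℝ) = ∑' i, ((q : ℝ) / 512) * (1/2)^i := by
          simp only [epsq_cast]
      _ = ((q : ℝ) / 512) * ∑' i, (1/2 : ℝ)^i := tsum_mul_left
      _ = (q : ℝ) / 256 := by rw [h]; norm_num; ring
  exact le_of_eq heq

lemma epsq_cast_nonneg {q : ℚ} (hq : 0 < q) (i : ℕ) : (0:ℝ) ≤ ((epsq q i : ℚ) : ℝ) := by
  exact_mod_cast (epsq_pos hq i).le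

/-- the total dead weight of node `t` for games `≥ M`. -/
noncomputable def WF (M : ℕ) (q : ℚ) (t : List Bool) : ℝ :=
  ∑' i, if M ≤ i then (μ (cyl t ∩ DeadSet μ (T i) (s i) (epsq q i))).toReal else 0

/-- The strategy for the combined game. -/
noncomputable def finalStrat (Mq : ℚ → ℕ) : StratII := fun h mv =>
  if ((mv.1 : ℚ) : ℝ) > WF μ T s (Mq (qOf h mv)) (qOf h mv) ((h.map Prod.snd) ++ [false])
  then false else true

variable {μ T s}

lemma summable_majorant (hs0 : ∀ i, 0 ≤ s i) (hsum : Summable s) {q : ℚ} (hq : 0 < q) (M : ℕ) :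
    Summable (fun i => if M ≤ i then 2 * s i + 3 * ((epsq q i : ℚ) : ℝ) else 0) := by
  have hmaj : Summable (fun i => 2 * s i + 3 * ((epsq q i : ℚ) : ℝ)) :=
    (hsum.mul_left 2).add ((summable_epsq q).mul_left 3)
  have hterm : ∀ i, (0:ℝ) ≤ 2 * s i + 3 * ((epsq q i : ℚ) : ℝ) := by
    intro i
    have h1 := hs0 i
    have h2 := epsq_cast_nonneg hq i
    linarith
  apply Summable.of_nonneg_of_le _ _ hmaj
  · intro i
    by_cases h : M ≤ i
    · rw [if_pos h]; exact hterm i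
    · rw [if_neg h]
  · intro i
    by_cases h : M ≤ i
    · rw [if_pos h]
    · rw [if_neg h]; exact hterm i

lemma wf_term_le {A' : ℕ → Set Cantor}
    (hT : ∀ i, ∀ r : Run, ConsII (T i) r → IIWinsRun μ (s i) (A' i) r)
    (hs0 : ∀ i, 0 ≤ s i) {q : ℚ} (hq : 0 < q) (M : ℕ) (t : List Bool) (i : ℕ) :
    (if M ≤ i then (μ (cyl t ∩ DeadSet μ (T i) (s i) (epsq q i))).toReal else 0) ≤
      (if M ≤ i then 2 * s i + 3 * ((epsq q i : ℚ) : ℝ) else 0) := by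
  by_cases h : M ≤ i
  · simp only [if_pos h]
    calc (μ (cyl t ∩ DeadSet μ (T i) (s i) (epsq q i))).toReal
        ≤ (μ (DeadSet μ (T i) (s i) (epsq q i))).toReal := by
          apply ENNReal.toReal_mono (measure_ne_top μ _)
          exact measure_mono Set.inter_subset_right
      _ ≤ 2 * s i + 3 * ((epsq q i : ℚ) : ℝ) :=
          deadSet_measure_le μ (hT i) (hs0 i) (epsq_pos hq i)
  · simp [h]

lemma wf_term_nonneg (M : ℕ) (q : ℚ) (t : List Bool) (i : ℕ) :
    (0:ℝ) ≤ (if M ≤ i then (μ (cyl t ∩ DeadSet μ (T i) (s i) (epsq q i))).toReal else 0) := by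
  by_cases h : M ≤ i
  · rw [if_pos h]; exact ENNReal.toReal_nonneg
  · rw [if_neg h]

lemma wf_summable {A' : ℕ → Set Cantor}
    (hT : ∀ i, ∀ r : Run, ConsII (T i) r → IIWinsRun μ (s i) (A' i) r)
    (hs0 : ∀ i, 0 ≤ s i) (hsum : Summable s) {q : ℚ} (hq : 0 < q) (M : ℕ) (t : List Bool) :
    Summable (fun i => if M ≤ i then
      (μ (cyl t ∩ DeadSet μ (T i) (s i) (epsq q i))).toReal else 0) :=
  Summable.of_nonneg_of_le (wf_term_nonneg M q t) (wf_term_le hT hs0 hq M t)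
    (summable_majorant hs0 hsum hq M)

lemma wf_nonneg (M : ℕ) (q : ℚ) (t : List Bool) : 0 ≤ WF μ T s M q t :=
  tsum_nonneg (wf_term_nonneg M q t)

lemma wf_split {A' : ℕ → Set Cantor}
    (hT : ∀ i, ∀ r : Run, ConsII (T i) r → IIWinsRun μ (s i) (A' i) r)
    (hs0 : ∀ i, 0 ≤ s i) (hsum : Summable s) {q : ℚ} (hq : 0 < q) (M : ℕ) (t : List Bool) :
    WF μ T s M q t = WF μ T s M q (t ++ [false]) + WF μ T s M q (t ++ [true]) := by
  unfold WF
  rw [← Summable.tsum_add (wf_summable hT hs0 hsum hq M _) (wf_summable hT hs0 hsum hq M _)]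
  apply tsum_congr
  intro i
  by_cases h : M ≤ i
  · simp only [if_pos h]
    exact measure_cylF_split μ (measurable_deadSet μ (T i) (s i) (epsq q i)) t
  · simp [h]

lemma wf_ge_single {A' : ℕ → Set Cantor}
    (hT : ∀ i, ∀ r : Run, ConsII (T i) r → IIWinsRun μ (s i) (A' i) r)
    (hs0 : ∀ i, 0 ≤ s i) (hsum : Summable s) {q : ℚ} (hq : 0 < q) (M : ℕ) {t : List Bool}
    {i : ℕ} (hi : M ≤ i) (hdead : ¬ Alive μ (T i) (s i) (epsq q i) t) :
    (μ (cyl t)).toReal ≤ WF μ T s M q t := by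
  have hsub : cyl t ∩ DeadSet μ (T i) (s i) (epsq q i) = cyl t :=
    Set.inter_eq_left.mpr (cyl_subset_deadSet hdead)
  have hterm : (if M ≤ i then (μ (cyl t ∩ DeadSet μ (T i) (s i) (epsq q i))).toReal else 0)
      = (μ (cyl t)).toReal := by
    rw [if_pos hi, hsub]
  rw [← hterm]
  exact Summable.le_tsum (wf_summable hT hs0 hsum hq M t) i (fun j _ => wf_term_nonneg M q t j)

lemma wf_root_lt {A' : ℕ → Set Cantor}
    (hT : ∀ i, ∀ r : Run, ConsII (T i) r → IIWinsRun μ (s i) (A' i) r)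
    (hs0 : ∀ i, 0 ≤ s i) (hsum : Summable s) {q : ℚ} (hq : 0 < q) {M : ℕ}
    (htail : (∑' i, s (i + M)) < (q : ℝ) / 8) :
    WF μ T s M q [] < (q : ℝ) := by
  have hqr : (0:ℝ) < (q : ℝ) := by exact_mod_cast hq
  have h1 : WF μ T s M q [] ≤ ∑' i, (if M ≤ i then 2 * s i + 3 * ((epsq q i : ℚ) : ℝ) else 0) :=
    Summable.tsum_le_tsum (wf_term_le hT hs0 hq M []) (wf_summable hT hs0 hsum hq M [])
      (summable_majorant hs0 hsum hq M)
  have hs2 : Summable (fun i => if M ≤ i then 2 * s i else 0) := by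
    apply Summable.of_nonneg_of_le _ _ (hsum.mul_left 2)
    · intro i
      by_cases h : M ≤ i
      · rw [if_pos h]; linarith [hs0 i]
      · rw [if_neg h]
    · intro i
      by_cases h : M ≤ i
      · rw [if_pos h]
      · rw [if_neg h]; linarith [hs0 i]
  have hs3 : Summable (fun i => if M ≤ i then 3 * ((epsq q i : ℚ) : ℝ) else 0) := by
    apply Summable.of_nonneg_of_le _ _ ((summable_epsq q).mul_left 3)
    · intro i
      by_cases h : M ≤ i
      · rw [if_pos h]; linarith [epsq_cast_nonneg hq i]
      · rw [if_neg h]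
    · intro i
      by_cases h : M ≤ i
      · rw [if_pos h]
      · rw [if_neg h]; linarith [epsq_cast_nonneg hq i]
  have hsplit : ∑' i, (if M ≤ i then 2 * s i + 3 * ((epsq q i : ℚ) : ℝ) else 0)
      = (∑' i, (if M ≤ i then 2 * s i else 0))
        + ∑' i, (if M ≤ i then 3 * ((epsq q i : ℚ) : ℝ) else 0) := by
    rw [← Summable.tsum_add hs2 hs3]
    apply tsum_congr
    intro i
    by_cases h : M ≤ i <;> simp [h]
  have hpiece1 : ∑' i, (if M ≤ i then 2 * s i else 0) = 2 * ∑' i, s (i + M) := by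
    have h := Summable.sum_add_tsum_nat_add (f := fun i => if M ≤ i then 2 * s i else 0) M hs2
    have hzero : ∑ i ∈ Finset.range M, (if M ≤ i then 2 * s i else 0) = 0 := by
      apply Finset.sum_eq_zero
      intro i hi
      rw [if_neg (Nat.not_le.mpr (Finset.mem_range.mp hi))]
    rw [hzero, zero_add] at h
    rw [← h]
    have hcong : ∀ i : ℕ, (if M ≤ i + M then 2 * s (i + M) else 0) = 2 * s (i + M) := by
      intro i; rw [if_pos (Nat.le_add_left M i)]
    rw [tsum_congr hcong, ← tsum_mul_left]
  have hpiece2 : ∑' i, (if M ≤ i then 3 * ((epsq q i : ℚ) : ℝ) else 0) ≤ 3 * ((q:ℝ)/256) := by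
    have hle1 : ∑' i, (if M ≤ i then 3 * ((epsq q i : ℚ) : ℝ) else 0)
        ≤ ∑' i, 3 * ((epsq q i : ℚ) : ℝ) := by
      apply Summable.tsum_le_tsum _ hs3 ((summable_epsq q).mul_left 3)
      intro i
      by_cases h : M ≤ i
      · rw [if_pos h]
      · rw [if_neg h]; linarith [epsq_cast_nonneg hq i]
    have hle2 : ∑' i, 3 * ((epsq q i : ℚ) : ℝ) = 3 * ∑' i, ((epsq q i : ℚ) : ℝ) := tsum_mul_left
    have hle3 := tsum_epsq_le hq
    linarith
  have h2 : 2 * ∑' i, s (i + M) ≤ 2 * ((q:ℝ)/8) := by linarith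
  calc WF μ T s M q [] ≤ _ := h1
    _ = (∑' i, (if M ≤ i then 2 * s i else 0))
        + ∑' i, (if M ≤ i then 3 * ((epsq q i : ℚ) : ℝ) else 0) := hsplit
    _ ≤ 2 * ((q:ℝ)/8) + 3 * ((q:ℝ)/256) := by
        rw [hpiece1]
        linarith [hpiece2]
    _ < (q:ℝ) := by linarith

end Final



/-- Borel–Cantelli (convergence direction), game version: if `∑ᵢ sᵢ < ∞` and player II wins
each `G(sᵢ, Aᵢ)`, then player II wins `G(0, ⋃_{m≥1} ⋂_{i≥m} Aᵢ)`. -/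
theorem borel_cantelli_convergence (μ : Measure Cantor) [IsProbabilityMeasure μ]
    (s : ℕ → ℝ) (A : ℕ → Set Cantor) (hs0 : ∀ i, 0 ≤ s i) (hs1 : ∀ i, s i < 1)
    (hsum : Summable s) (hwin : ∀ i, WinsII μ (s i) (A i)) :
    WinsII μ 0 (⋃ m ∈ {m : ℕ | 1 ≤ m}, ⋂ i ∈ {i : ℕ | m ≤ i}, A i) := by
  classical
  choose T hT using hwin
  have htail0 : Filter.Tendsto (fun M => ∑' i, s (i + M)) Filter.atTop (nhds 0) :=
    tendsto_sum_nat_add s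
  have hMex : ∀ q : ℚ, 0 < q → ∃ M : ℕ, 1 ≤ M ∧ (∑' i, s (i + M)) < (q : ℝ) / 8 := by
    intro q hq
    have hq8 : (0:ℝ) < (q:ℝ)/8 := by
      have : (0:ℝ) < (q:ℝ) := by exact_mod_cast hq
      linarith
    have hev : ∀ᶠ M in Filter.atTop, (∑' i, s (i + M)) < (q:ℝ)/8 :=
      htail0.eventually_lt_const hq8
    obtain ⟨N, hN⟩ := Filter.eventually_atTop.mp hev
    exact ⟨max N 1, le_max_right _ _, hN _ (le_max_left _ _)⟩
  set Mq : ℚ → ℕ := fun q => if hq : 0 < q then (hMex q hq).choose else 1 with hMqdef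
  refine ⟨finalStrat μ T s Mq, ?_⟩
  intro r hr
  set q : ℚ := (r 0).1.1 + (r 0).1.2 with hqdef
  set M : ℕ := Mq q with hMdef
  have hstrat : ∀ n, bits r n =
      (if (((r n).1.1 : ℚ) : ℝ) > WF μ T s M q (path r n ++ [false]) then false else true) := by
    intro n
    have hc := hr n
    have hq' : qOf (hist r n) ((r n).1) = q := by
      cases n with
      | zero => rw [hist_zero]; rfl
      | succ m => rw [qOf_hist_succ]
    unfold bits
    rw [hc]
    show finalStrat μ T s Mq (hist r n) (r n).1 = _
    unfold finalStrat
    rw [hq', ← path_eq_hist_map, ← hMdef]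
  by_cases h00 : IOK μ 0 r 0
  · have hq : 0 < q := by
      have h3 := h00.2.2
      have h4 : (0:ℝ) < ((q : ℚ) : ℝ) := by rw [hqdef]; push_cast; linarith
      exact_mod_cast h4
    have hMspec : 1 ≤ M ∧ (∑' i, s (i + M)) < (q:ℝ)/8 := by
      rw [hMdef, hMqdef]
      simp only [dif_pos hq]
      exact (hMex q hq).choose_spec
    -- one step of the invariant
    have step : ∀ n (c : ℝ), (((r n).1.1 : ℚ) : ℝ) + (((r n).1.2 : ℚ) : ℝ) = c →
        WF μ T s M q (path r n) < c →
        WF μ T s M q (path r (n+1)) < ((sel r n : ℚ) : ℝ) := by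
      intro n c hc hlt
      have hsplit := wf_split hT hs0 hsum hq M (path r n)
      have hb := hstrat n
      rw [path_succ]
      unfold sel valI
      by_cases hcond : (((r n).1.1 : ℚ) : ℝ) > WF μ T s M q (path r n ++ [false])
      · rw [if_pos hcond] at hb
        rw [hb]
        simpa using hcond
      · rw [if_neg hcond] at hb
        rw [hb]
        simp only [if_true]
        push_neg at hcond
        linarith
    have hinv : ∀ n, (∀ j, j ≤ n → IOK μ 0 r j) → WF μ T s M q (path r (n+1)) < ((sel r n : ℚ) : ℝ) := by
      intro n
      induction n with
      | zero =>
        intro _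
        apply step 0 ((q:ℚ):ℝ)
        · rw [hqdef]; push_cast; ring
        · rw [path_zero]
          exact wf_root_lt hT hs0 hsum hq hMspec.2
      | succ n ih =>
        intro h
        have hcons : (r (n+1)).1.1 + (r (n+1)).1.2 = sel r n := (h (n+1) le_rfl).2.2
        apply step (n+1) ((sel r n : ℚ) : ℝ)
        · exact_mod_cast congrArg (fun z : ℚ => ((z : ℚ) : ℝ)) hcons
        · exact ih (fun j hj => h j (le_trans hj (Nat.le_succ n)))
    have hIIOK : ∀ n, (∀ j, j ≤ n → IOK μ 0 r j) → IIOK r n := by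
      intro n h
      have h1 := hinv n h
      have h2 := wf_nonneg (μ := μ) (T := T) (s := s) M q (path r (n+1))
      intro h0
      rw [h0] at h1
      push_cast at h1
      linarith
    by_cases hall : ∀ n, IOK μ 0 r n
    · refine Or.inr ⟨fun n => ⟨hall n, hIIOK n (fun j _ => hall j)⟩, ?_⟩
      have halive : ∀ i, M ≤ i → ∀ n,
          Alive μ (T i) (s i) (epsq q i) ((List.range n).map (bits r)) := by
        intro i hi n
        have hpth : (List.range n).map (bits r) = path r n := rfl
        rw [hpth]
        by_contra hdead
        cases n with
        | zero =>
          rw [path_zero] at hdead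
          exact hdead (alive_nil μ (T i) (s i) (epsq q i))
        | succ k =>
          have h1 := wf_ge_single hT hs0 hsum hq M hi hdead
          have h2 := hinv k (fun j _ => hall j)
          have hmokk : ∀ b, mOK μ r k b := by
            intro b
            have h := hall k
            cases k with
            | zero => cases b; exacts [h.1, h.2.1]
            | succ m => cases b; exacts [h.1, h.2.1]
          have h3 : ((sel r k : ℚ) : ℝ) ≤ (μ (cyl (path r (k+1)))).toReal := by
            rw [path_succ]
            exact (hmokk (bits r k)).2.1
          linarith
      simp only [Set.mem_iUnion, Set.mem_iInter, Set.mem_setOf_eq]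
      refine ⟨M, hMspec.1, fun i hi => ?_⟩
      obtain ⟨ri, hIOKi, hConsi, hbitsi⟩ :=
        exists_compliant_run μ (T i) (s i) (epsq q i) (bits r) (epsq_pos hq i) (halive i hi)
      have hm := (winning_run_props (hT i) hConsi hIOKi).2
      rwa [hbitsi] at hm
    · push_neg at hall
      have hex : ∃ k, ¬ IOK μ 0 r k := hall
      left
      refine ⟨Nat.find hex, ?_, Nat.find_spec hex⟩
      intro m hm
      have hIOKm : ∀ j, j ≤ m → IOK μ 0 r j := by
        intro j hj
        have hjk : j < Nat.find hex := lt_of_le_of_lt hj hm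
        exact not_not.mp (Nat.find_min hex hjk)
      exact ⟨hIOKm m le_rfl, hIIOK m hIOKm⟩
  · exact Or.inl ⟨0, fun m hm => absurd hm (Nat.not_lt_zero m), h00⟩


end MeasureGame
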